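/- Let δ, μ, β be real constants with δ ≠ 0 and β ≠ 0. Define θ(t,x) = μx/(10δ) + 6μ³t/(250δ²) and U(t,x) = (3μ²/(25βδ))·sech²(θ(t,x)) + (6μ²/(25βδ))·tanh(θ(t,x)) + 6μ²/(25βδ). Then U satisfies the constant-coefficient Korteweg–de Vries–Burgers equation ∂ₜU(t,x) = δ·∂ₓₓₓU(t,x) + μ·∂ₓₓU(t,x) + β·U(t,x)·∂ₓU(t,x) for all (t,x) ∈ ℝ × ℝ. -/

import Mathlib

open Real

private lemma tanh_hasDerivAt (z : ℝ) :
    HasDerivAt Real.tanh (1 - Real.tanh z ^ 2) z := by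
  have h := (Real.hasDerivAt_sinh z).div (Real.hasDerivAt_cosh z) (Real.cosh_pos z).ne'
  have heq : (Real.cosh z * Real.cosh z - Real.sinh z * Real.sinh z) / Real.cosh z ^ 2
      = 1 - Real.tanh z ^ 2 := by
    rw [Real.tanh_eq_sinh_div_cosh]
    have h1 : Real.cosh z ≠ 0 := (Real.cosh_pos z).ne'
    have h2 := Real.cosh_sq_sub_sinh_sq z
    field_simp
  have h' : HasDerivAt (fun x => Real.sinh x / Real.cosh x) (1 - Real.tanh z ^ 2) z := by
    rw [← heq]; exact h
  have hfun : Real.tanh = fun x => Real.sinh x / Real.cosh x := by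
    funext x; exact Real.tanh_eq_sinh_div_cosh x
  rw [show (1 - Real.tanh z ^ 2) = (1 - (Real.sinh z / Real.cosh z) ^ 2) by
    rw [Real.tanh_eq_sinh_div_cosh], hfun]
  rw [show (1 - (Real.sinh z / Real.cosh z) ^ 2) = (1 - Real.tanh z ^ 2) by
    rw [Real.tanh_eq_sinh_div_cosh]]
  exact h'

private lemma sech_sq (z : ℝ) : ((Real.cosh z)⁻¹) ^ 2 = 1 - Real.tanh z ^ 2 := by
  have h1 : Real.cosh z ≠ 0 := (Real.cosh_pos z).ne'
  have h2 := Real.cosh_sq_sub_sinh_sq z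
  rw [Real.tanh_eq_sinh_div_cosh]
  field_simp
  linarith

/-- derivative of a degree-4 polynomial in `tanh (a*y + b)`. -/
private lemma poly_tanh_hasDerivAt (a b k0 k1 k2 k3 k4 x : ℝ) :
    HasDerivAt (fun y : ℝ => k0 + k1 * Real.tanh (a * y + b) + k2 * Real.tanh (a * y + b) ^ 2
        + k3 * Real.tanh (a * y + b) ^ 3 + k4 * Real.tanh (a * y + b) ^ 4)
      ((k1 + 2 * k2 * Real.tanh (a * x + b) + 3 * k3 * Real.tanh (a * x + b) ^ 2
        + 4 * k4 * Real.tanh (a * x + b) ^ 3) * (a * (1 - Real.tanh (a * x + b) ^ 2))) x := by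
  have hlin : HasDerivAt (fun y : ℝ => a * y + b) a x := by
    simpa using ((hasDerivAt_id x).const_mul a).add_const b
  have hT : HasDerivAt (fun y : ℝ => Real.tanh (a * y + b))
      ((1 - Real.tanh (a * x + b) ^ 2) * a) x :=
    by have := (tanh_hasDerivAt (a * x + b)).comp x hlin; exact this
  have h1 := hT.const_mul k1
  have h2 := (hT.pow 2).const_mul k2
  have h3 := (hT.pow 3).const_mul k3
  have h4 := (hT.pow 4).const_mul k4
  have := (((h1.const_add k0).add h2).add h3).add h4
  refine this.congr_deriv ?_
  norm_num only
  ring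

set_option maxHeartbeats 1000000 in
/-- The explicit traveling-wave solution of the constant-coefficient
Korteweg–de Vries–Burgers equation
`∂ₜU = δ ∂ₓₓₓU + μ ∂ₓₓU + β U ∂ₓU`.
Here `sech y = (cosh y)⁻¹`, `∂ₜ` is the derivative in the first (time) variable,
and `∂ₓ, ∂ₓₓ, ∂ₓₓₓ` the first, second and third derivatives in the second
(space) variable. -/
theorem kdv_burgers_traveling_wave_solution
    (δ μ β : ℝ) (hδ : δ ≠ 0) (hβ : β ≠ 0)
    (θ : ℝ → ℝ → ℝ)
    (hθ : ∀ t x, θ t x = μ * x / (10 * δ) + 6 * μ ^ 3 * t / (250 * δ ^ 2))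
    (U : ℝ → ℝ → ℝ)
    (hU : ∀ t x, U t x =
      (3 * μ ^ 2 / (25 * β * δ)) * ((Real.cosh (θ t x))⁻¹) ^ 2 +
        (6 * μ ^ 2 / (25 * β * δ)) * Real.tanh (θ t x) +
        6 * μ ^ 2 / (25 * β * δ)) :
    ∀ t x, deriv (fun τ => U τ x) t =
      δ * deriv (deriv (deriv (fun y => U t y))) x +
        μ * deriv (deriv (fun y => U t y)) x +
        β * U t x * deriv (fun y => U t y) x := by
  intro t x
  set A : ℝ := 3 * μ ^ 2 / (25 * β * δ) with hA
  set a : ℝ := μ / (10 * δ) with ha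
  set c : ℝ := 6 * μ ^ 3 / (250 * δ ^ 2) with hc
  have hθ' : ∀ t x, θ t x = a * x + c * t := by
    intro t x; rw [hθ]; rw [ha, hc]; ring
  -- space shape of U
  have hUx : ∀ t : ℝ, (fun y => U t y) = fun y =>
      (3 * A) + (2 * A) * Real.tanh (a * y + c * t) + (-A) * Real.tanh (a * y + c * t) ^ 2
        + 0 * Real.tanh (a * y + c * t) ^ 3 + 0 * Real.tanh (a * y + c * t) ^ 4 := by
    intro t; funext y
    rw [hU, sech_sq, hθ' t y, hA]
    ring
  -- time shape of U
  have hUt : (fun τ => U τ x) = fun τ =>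
      (3 * A) + (2 * A) * Real.tanh (c * τ + a * x) + (-A) * Real.tanh (c * τ + a * x) ^ 2
        + 0 * Real.tanh (c * τ + a * x) ^ 3 + 0 * Real.tanh (c * τ + a * x) ^ 4 := by
    funext τ
    rw [hU, sech_sq, hθ' τ x, hA]
    have : a * x + c * τ = c * τ + a * x := by ring
    rw [this]; ring
  set T : ℝ := Real.tanh (a * x + c * t) with hT
  -- first spatial derivative
  have hd1 : deriv (fun y => U t y) = fun y =>
      (2 * A * a) + (-2 * A * a) * Real.tanh (a * y + c * t)
        + (-2 * A * a) * Real.tanh (a * y + c * t) ^ 2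
        + (2 * A * a) * Real.tanh (a * y + c * t) ^ 3
        + 0 * Real.tanh (a * y + c * t) ^ 4 := by
    funext y
    rw [hUx t, (poly_tanh_hasDerivAt a (c * t) (3 * A) (2 * A) (-A) 0 0 y).deriv]
    ring
  -- second spatial derivative
  have hd2 : deriv (deriv (fun y => U t y)) = fun y =>
      (-2 * A * a ^ 2) + (-2 * A * a ^ 2 * 2) * Real.tanh (a * y + c * t)
        + (8 * A * a ^ 2) * Real.tanh (a * y + c * t) ^ 2
        + (4 * A * a ^ 2) * Real.tanh (a * y + c * t) ^ 3
        + (-6 * A * a ^ 2) * Real.tanh (a * y + c * t) ^ 4 := by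
    funext y
    rw [hd1,
      (poly_tanh_hasDerivAt a (c * t) (2 * A * a) (-2 * A * a) (-2 * A * a) (2 * A * a) 0 y).deriv]
    ring
  -- third spatial derivative (value only)
  have hd3 : deriv (deriv (deriv (fun y => U t y))) x =
      ((-2 * A * a ^ 2 * 2) + 2 * (8 * A * a ^ 2) * T + 3 * (4 * A * a ^ 2) * T ^ 2
        + 4 * (-6 * A * a ^ 2) * T ^ 3) * (a * (1 - T ^ 2)) := by
    rw [hd2]
    exact (poly_tanh_hasDerivAt a (c * t) (-2 * A * a ^ 2) (-2 * A * a ^ 2 * 2) (8 * A * a ^ 2)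
      (4 * A * a ^ 2) (-6 * A * a ^ 2) x).deriv
  -- time derivative (value only)
  have hdt : deriv (fun τ => U τ x) t =
      ((2 * A) + 2 * (-A) * Real.tanh (c * t + a * x) + 0 + 0)
        * (c * (1 - Real.tanh (c * t + a * x) ^ 2)) := by
    rw [hUt]
    have := (poly_tanh_hasDerivAt c (a * x) (3 * A) (2 * A) (-A) 0 0 t).deriv
    rw [this]; ring
  have hd2x : deriv (deriv (fun y => U t y)) x =
      (-2 * A * a ^ 2) + (-2 * A * a ^ 2 * 2) * T + (8 * A * a ^ 2) * T ^ 2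
        + (4 * A * a ^ 2) * T ^ 3 + (-6 * A * a ^ 2) * T ^ 4 := by
    rw [hd2]
  have hd1x : deriv (fun y => U t y) x =
      (2 * A * a) + (-2 * A * a) * T + (-2 * A * a) * T ^ 2 + (2 * A * a) * T ^ 3
        + 0 * T ^ 4 := by
    rw [hd1]
  have hUtx : U t x = 3 * A + 2 * A * T + -A * T ^ 2 := by
    rw [hU t x, sech_sq, hθ' t x, ← hT]; rw [hA]; ring
  have hcomm : c * t + a * x = a * x + c * t := by ring
  rw [hdt, hd3, hd2x, hd1x, hUtx, hcomm, ← hT]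
  rw [hA, ha, hc]
  have hβδ : β * δ ≠ 0 := mul_ne_zero hβ hδ
  field_simp
  ring
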